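/- The function v_∞ itself belongs to the set G; that is, v_∞ ≥ v pointwise, and v_∞(σ(e)) ≥ Σ_{j∈[m]} λ_j v_∞(p_j) for every experiment e = (λ_j, p_j)_{j∈[m]} ∈ F. -/

import Mathlib

open Filter Topology
open scoped Classical

noncomputable section

/-- Δ(Ω): beliefs, i.e. probability distributions on the finite state space Ω,
as a subspace of Ω → ℝ (its topology agrees with the total-variation one). -/
abbrev Belief (Ω : Type*) [Fintype Ω] :=
  {p : Ω → ℝ // (∀ ω, 0 ≤ p ω) ∧ ∑ ω, p ω = 1}

variable {Ω : Type*} [Fintype Ω]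

/-- An element of F₀: a finite-support experiment, i.e. a finitely supported probability
distribution over beliefs (keys are the distinct posteriors p_j, values the positive
weights λ_j). -/
structure SPExp (Ω : Type*) [Fintype Ω] where
  w : Belief Ω →₀ ℝ
  nonneg : ∀ p, 0 ≤ w p
  sum_one : ∑ p ∈ w.support, w p = 1

namespace SPExp

/-- τ(e): the support of an experiment. -/
def tau (e : SPExp Ω) : Finset (Belief Ω) := e.w.support

/-- Expectation of a real-valued function under an experiment. -/
def expect (e : SPExp Ω) (f : Belief Ω → ℝ) : ℝ := ∑ p ∈ e.w.support, e.w p * f p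

/-- σ(e): the barycenter (expectation) of an experiment. -/
def sigma (e : SPExp Ω) : Belief Ω :=
  ⟨fun ω => ∑ p ∈ e.w.support, e.w p * p.val ω,
   fun ω => Finset.sum_nonneg fun p _ => mul_nonneg (e.nonneg p) (p.2.1 ω),
   by
     calc ∑ ω, ∑ p ∈ e.w.support, e.w p * p.val ω
         = ∑ p ∈ e.w.support, ∑ ω, e.w p * p.val ω := Finset.sum_comm
       _ = ∑ p ∈ e.w.support, e.w p * ∑ ω, p.val ω := by
           refine Finset.sum_congr rfl fun p _ => ?_
           rw [Finset.mul_sum]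
       _ = ∑ p ∈ e.w.support, e.w p := by
           refine Finset.sum_congr rfl fun p _ => ?_
           rw [p.2.2, mul_one]
       _ = 1 := e.sum_one⟩

/-- The trivial experiment (1, p). -/
def triv (p : Belief Ω) : SPExp Ω where
  w := Finsupp.single p 1
  nonneg := fun q => by
    rw [Finsupp.single_apply]
    split <;> norm_num
  sum_one := by
    rw [Finsupp.support_single_ne_zero _ one_ne_zero]
    simp

end SPExp

/-- T: the set of trivial experiments. -/
def Trivials (Ω : Type*) [Fintype Ω] : Set (SPExp Ω) := Set.range SPExp.triv

/-- Weak convergence of experiments, viewed as Borel probability measures on Δ(Ω). -/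
def WeakTendsto (es : ℕ → SPExp Ω) (e : SPExp Ω) : Prop :=
  ∀ f : Belief Ω → ℝ, Continuous f →
    Tendsto (fun i => (es i).expect f) atTop (𝓝 (e.expect f))

/-- Convergence of beliefs in total variation. -/
def TVTendsto (ps : ℕ → Belief Ω) (p : Belief Ω) : Prop :=
  Tendsto (fun i => ∑ ω, |(ps i).val ω - p.val ω|) atTop (𝓝 0)

/-- Histories, most recent step first: entries are (experiment taken, realized posterior);
the starting belief is kept separately. -/
abbrev Hist (Ω : Type*) [Fintype Ω] := List (SPExp Ω × Belief Ω)

/-- last(ξ): the current belief after history ξ started at μ. -/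
def lastBelief (μ : Belief Ω) : Hist Ω → Belief Ω
  | [] => μ
  | (_, p) :: _ => p

/-- Pr[ξ]: the probability of a history. -/
def histProb : Hist Ω → ℝ
  | [] => 1
  | (e, p) :: ξ => e.w p * histProb ξ

/-- A sequential persuasion starting from μ with feasible experiments F, given by its
history-dependent choice of the next (feasible, Bayes-plausible) experiment.  An n-step
sequential persuasion is such a strategy used for n steps; an infinite sequential
persuasion is the strategy itself. -/
structure SeqP {Ω : Type*} [Fintype Ω] (F : Set (SPExp Ω)) (μ : Belief Ω) where
  next : Hist Ω → SPExp Ω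
  feasible : ∀ ξ, next ξ ∈ F
  bayes : ∀ ξ, (next ξ).sigma = lastBelief μ ξ

variable {F : Set (SPExp Ω)} {μ : Belief Ω}

/-- Expectation of g over the n-step histories of S extending ξ. -/
def histExp (S : SeqP F μ) (g : Hist Ω → ℝ) : ℕ → Hist Ω → ℝ
  | 0, ξ => g ξ
  | n + 1, ξ => (S.next ξ).expect fun p => histExp S g n ((S.next ξ, p) :: ξ)

/-- Ξ_n: the set of n-step histories of S. -/
def Hists (S : SeqP F μ) : ℕ → Set (Hist Ω)
  | 0 => {[]}
  | n + 1 => {ξ' | ∃ ξ ∈ Hists S n, ∃ p ∈ (S.next ξ).tau, ξ' = (S.next ξ, p) :: ξ}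

/-- ξ padded by l trivial steps. -/
def padHist (μ : Belief Ω) (ξ : Hist Ω) (l : ℕ) : Hist Ω :=
  List.replicate l (SPExp.triv (lastBelief μ ξ), lastBelief μ ξ) ++ ξ

/-- S terminates after ξ: all subsequent choices (along trivial continuations of ξ)
are the trivial experiment. -/
def TerminatesAfter (S : SeqP F μ) (ξ : Hist Ω) : Prop :=
  ∀ l : ℕ, S.next (padHist μ ξ l) = SPExp.triv (lastBelief μ ξ)

/-- 𝒱(S⁽ⁿ⁾) = E[v(b_n)], the expected utility of the n-step persuasion given by the
first n steps of S. -/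
def stepUtility (v : Belief Ω → ℝ) (S : SeqP F μ) (n : ℕ) : ℝ :=
  histExp S (fun ξ => v (lastBelief μ ξ)) n []

/-- Pr[S terminates after n steps]. -/
def termProb (S : SeqP F μ) (n : ℕ) : ℝ :=
  histExp S (fun ξ => if TerminatesAfter S ξ then 1 else 0) n []

/-- 𝒱(S) for an infinite sequential persuasion S. -/
def infUtility (v : Belief Ω → ℝ) (S : SeqP F μ) : ℝ :=
  ⨆ n : ℕ, histExp S (fun ξ => if TerminatesAfter S ξ then v (lastBelief μ ξ) else 0) n []

/-- Pr[b_n ∈ O] for the belief b_n induced by S after n steps. -/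
def massIn (S : SeqP F μ) (O : Set (Belief Ω)) (n : ℕ) : ℝ :=
  histExp S (fun ξ => if lastBelief μ ξ ∈ O then 1 else 0) n []

/-- v_n(p): the optimal value over n-step sequential persuasions starting from p. -/
def vN (F : Set (SPExp Ω)) (v : Belief Ω → ℝ) (n : ℕ) (p : Belief Ω) : ℝ :=
  ⨆ S : SeqP F p, stepUtility v S n

/-- v_∞(p): the optimal value over infinite sequential persuasions starting from p. -/
def vInf (F : Set (SPExp Ω)) (v : Belief Ω → ℝ) (p : Belief Ω) : ℝ :=
  ⨆ S : SeqP F p, infUtility v S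

/-- Assumption 1: a uniform support bound h, and weak closedness of F. -/
def Assumption1 (F : Set (SPExp Ω)) (h : ℕ) : Prop :=
  (∀ e ∈ F, e.tau.card ≤ h) ∧
  ∀ es : ℕ → SPExp Ω, (∀ i, es i ∈ F) → ∀ e : SPExp Ω, WeakTendsto es e → e ∈ F

/-- Shannon entropy of a belief. -/
def entropy (p : Belief Ω) : ℝ := -∑ ω, p.val ω * Real.log (p.val ω)

/-- Assumption 2: every nontrivial feasible experiment lowers expected entropy by δ. -/
def Assumption2 (F : Set (SPExp Ω)) (δ : ℝ) : Prop :=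
  ∀ e ∈ F \ Trivials Ω, e.expect entropy ≤ entropy e.sigma - δ

/-- S is (effectively) an n-step sequential persuasion: after n steps it only takes
trivial experiments. -/
def IsNStep (S : SeqP F μ) (n : ℕ) : Prop :=
  ∀ ξ : Hist Ω, n ≤ ξ.length → S.next ξ = SPExp.triv (lastBelief μ ξ)

/-- Assumption 3 at prior μ: a sequence of finite-step sequential persuasions whose
values tend to v_∞(μ) and which terminate at a uniform rate. -/
def Assumption3 (F : Set (SPExp Ω)) (v : Belief Ω → ℝ) (μ : Belief Ω) : Prop :=
  ∃ (nk : ℕ → ℕ) (Sk : ℕ → SeqP F μ),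
    (∀ k, IsNStep (Sk k) (nk k)) ∧
    Tendsto (fun k => stepUtility v (Sk k) (nk k)) atTop (𝓝 (vInf F v μ)) ∧
    ∀ ε : ℝ, 0 < ε → ∃ N : ℕ, ∀ k, N ≤ nk k → 1 - ε ≤ termProb (Sk k) N

/-- v̂: the concave closure of v (the value of unconstrained Bayesian persuasion). -/
def concaveClosure (v : Belief Ω → ℝ) (p : Belief Ω) : ℝ :=
  sSup {x : ℝ | ∃ e : SPExp Ω, e.sigma = p ∧ x = e.expect v}

/-- O is implementable for (μ, F). -/
def Implementable (F : Set (SPExp Ω)) (μ : Belief Ω) (O : Set (Belief Ω)) : Prop :=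
  ∀ ε : ℝ, 0 < ε → ∃ (n : ℕ) (S : SeqP F μ), 1 - ε < massIn S O n

/-- S is a Markov sequential persuasion compatible with (μ, D, Z, ρ). -/
def MarkovCompatible (S : SeqP F μ) (D Z : Set (Belief Ω)) (ρ : Belief Ω → SPExp Ω) : Prop :=
  ∀ ξ : Hist Ω,
    (lastBelief μ ξ ∈ D → S.next ξ = ρ (lastBelief μ ξ)) ∧
    (lastBelief μ ξ ∈ Z → S.next ξ = SPExp.triv (lastBelief μ ξ))

/-- The j-th child of vertex m at depth n of the infinite h-ary tree. -/
def treeChild {h n : ℕ} (m : Fin (h ^ n)) (j : Fin h) : Fin (h ^ (n + 1)) :=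
  ⟨m.val * h + j.val, by
    have h1 : m.val + 1 ≤ h ^ n := m.isLt
    have h2 : j.val < h := j.isLt
    calc m.val * h + j.val < m.val * h + h := by omega
      _ = (m.val + 1) * h := by ring
      _ ≤ h ^ n * h := Nat.mul_le_mul h1 le_rfl
      _ = h ^ (n + 1) := (pow_succ h n).symm⟩

/-- An h-branching sequential persuasion starting from μ. -/
structure HBranch (Ω : Type*) [Fintype Ω] (F : Set (SPExp Ω)) (h : ℕ) (μ : Belief Ω) where
  π : ∀ n : ℕ, Fin (h ^ n) → ℝ
  β : ∀ n : ℕ, Fin (h ^ n) → Belief Ω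
  η : ∀ n : ℕ, Fin (h ^ n) → SPExp Ω
  π_nonneg : ∀ n m, 0 ≤ π n m
  π_sum : ∀ n : ℕ, ∑ m, π n m = 1
  η_mem : ∀ n m, η n m ∈ F
  β_root : ∀ m, β 0 m = μ
  compat_sigma : ∀ n m, (η n m).sigma = β n m
  compat_tau : ∀ (n : ℕ) (m : Fin (h ^ n)), ∀ p ∈ (η n m).tau,
    ∃ j : Fin h, β (n + 1) (treeChild m j) = p
  consistent : ∀ (n : ℕ) (m : Fin (h ^ n)) (p : Belief Ω),
    (∑ j : Fin h, if β (n + 1) (treeChild m j) = p then π (n + 1) (treeChild m j) else 0)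
      = π n m * (η n m).w p

/-- c' (at depth n + l) is a descendant of c (at depth n) in the h-ary tree. -/
def Descendant {h : ℕ} : {n : ℕ} → (l : ℕ) → Fin (h ^ n) → Fin (h ^ (n + l)) → Prop
  | _, 0, c, c' => c = c'
  | _, l + 1, c, c' => ∃ c'' j, Descendant l c c'' ∧ c' = treeChild c'' j

namespace HBranch

variable {h : ℕ}

/-- B terminates after vertex m at depth n. -/
def TermAfter (B : HBranch Ω F h μ) (n : ℕ) (m : Fin (h ^ n)) : Prop :=
  B.η n m ∈ Trivials Ω ∧
  ∀ (l : ℕ) (c' : Fin (h ^ (n + l))), Descendant l m c' → 0 < B.π (n + l) c' →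
    B.η (n + l) c' ∈ Trivials Ω

/-- Pr[B terminates after n steps]. -/
def termProb (B : HBranch Ω F h μ) (n : ℕ) : ℝ :=
  ∑ m : Fin (h ^ n), if B.TermAfter n m then B.π n m else 0

end HBranch

/-- B represents the infinite sequential persuasion S (via maps r_n : C_n → Ξ_n). -/
def Represents (S : SeqP F μ) {h : ℕ} (B : HBranch Ω F h μ) : Prop :=
  ∃ r : ∀ n : ℕ, Fin (h ^ n) → Hist Ω,
    ∀ n : ℕ,
      (∀ c, r n c ∈ Hists S n) ∧
      (∀ ξ ∈ Hists S n, histProb ξ = ∑ c, if r n c = ξ then B.π n c else 0) ∧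
      (∀ c, lastBelief μ (r n c) = B.β n c ∧ S.next (r n c) = B.η n c) ∧
      (∀ l : ℕ, ∀ ξ ∈ Hists S n, ∀ ξ' ∈ Hists S (n + l),
        (ξ <:+ ξ' ↔
          ∀ c' : Fin (h ^ (n + l)), r (n + l) c' = ξ' →
            ∃ c : Fin (h ^ n), r n c = ξ ∧ Descendant l c c'))

/-- The number of nontrivial experiments taken along a history. -/
def nontrivCount (ξ : Hist Ω) : ℕ :=
  ξ.countP fun s => decide (s.1 ∉ Trivials Ω)

end

noncomputable section AuxVInf

variable {Ω : Type*} [Fintype Ω] {F : Set (SPExp Ω)}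

lemma aux_expect_mono (e : SPExp Ω) {f g : Belief Ω → ℝ} (h : ∀ p, f p ≤ g p) :
    e.expect f ≤ e.expect g :=
  Finset.sum_le_sum fun p _ => mul_le_mul_of_nonneg_left (h p) (e.nonneg p)

lemma aux_expect_nonneg (e : SPExp Ω) {f : Belief Ω → ℝ} (h : ∀ p, 0 ≤ f p) :
    0 ≤ e.expect f :=
  Finset.sum_nonneg fun p _ => mul_nonneg (e.nonneg p) (h p)

lemma aux_expect_le_const (e : SPExp Ω) {f : Belief Ω → ℝ} {C : ℝ} (h : ∀ p, f p ≤ C) :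
    e.expect f ≤ C := by
  calc e.expect f ≤ ∑ p ∈ e.w.support, e.w p * C :=
        Finset.sum_le_sum fun p _ => mul_le_mul_of_nonneg_left (h p) (e.nonneg p)
    _ = C := by rw [← Finset.sum_mul, e.sum_one, one_mul]

lemma aux_triv_support (p : Belief Ω) : (SPExp.triv p).w.support = {p} := by
  simp [SPExp.triv, Finsupp.support_single_ne_zero p one_ne_zero]

lemma aux_expect_triv (p : Belief Ω) (f : Belief Ω → ℝ) :
    (SPExp.triv p).expect f = f p := by
  rw [SPExp.expect, aux_triv_support]
  simp [SPExp.triv]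

lemma aux_sigma_triv (p : Belief Ω) : (SPExp.triv p).sigma = p := by
  apply Subtype.ext
  funext ω
  show ∑ q ∈ (SPExp.triv p).w.support, (SPExp.triv p).w q * q.val ω = p.val ω
  rw [aux_triv_support]
  simp [SPExp.triv]

lemma aux_lastBelief_pad (μ : Belief Ω) (ξ : Hist Ω) (l : ℕ) :
    lastBelief μ (padHist μ ξ l) = lastBelief μ ξ := by
  cases l with
  | zero => simp [padHist]
  | succ l => simp [padHist, List.replicate_succ, lastBelief]

/-- The always-trivial strategy. -/
def trivSP (hTF : Trivials Ω ⊆ F) (p : Belief Ω) : SeqP F p where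
  next ξ := SPExp.triv (lastBelief p ξ)
  feasible ξ := hTF ⟨_, rfl⟩
  bayes ξ := aux_sigma_triv _

lemma trivSP_term (hTF : Trivials Ω ⊆ F) (p : Belief Ω) (ξ : Hist Ω) :
    TerminatesAfter (trivSP hTF p) ξ := by
  intro l
  show SPExp.triv (lastBelief p (padHist p ξ l)) = _
  rw [aux_lastBelief_pad]

lemma aux_histExp_nonneg {μ : Belief Ω} (S : SeqP F μ) {g : Hist Ω → ℝ}
    (hg : ∀ ξ, 0 ≤ g ξ) : ∀ (n : ℕ) (ξ : Hist Ω), 0 ≤ histExp S g n ξ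
  | 0, ξ => hg ξ
  | n + 1, ξ => aux_expect_nonneg _ fun p => aux_histExp_nonneg S hg n _

lemma aux_histExp_le {μ : Belief Ω} (S : SeqP F μ) {g : Hist Ω → ℝ} {C : ℝ}
    (hg : ∀ ξ, g ξ ≤ C) : ∀ (n : ℕ) (ξ : Hist Ω), histExp S g n ξ ≤ C
  | 0, ξ => hg ξ
  | n + 1, ξ => aux_expect_le_const _ fun p => aux_histExp_le S hg n _

/-- The termination payoff function. -/
def tpay (v : Belief Ω → ℝ) {μ : Belief Ω} (S : SeqP F μ) (ξ : Hist Ω) : ℝ :=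
  if TerminatesAfter S ξ then v (lastBelief μ ξ) else 0

lemma infUtility_eq (v : Belief Ω → ℝ) {μ : Belief Ω} (S : SeqP F μ) :
    infUtility v S = ⨆ n : ℕ, histExp S (tpay v S) n [] := rfl

lemma tpay_nonneg {v : Belief Ω → ℝ} (hv : ∀ p, 0 ≤ v p) {μ : Belief Ω} (S : SeqP F μ)
    (ξ : Hist Ω) : 0 ≤ tpay v S ξ := by
  unfold tpay; split
  · exact hv _
  · exact le_refl 0

lemma term_next {μ : Belief Ω} {S : SeqP F μ} {ξ : Hist Ω} (h : TerminatesAfter S ξ) :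
    S.next ξ = SPExp.triv (lastBelief μ ξ) := by
  have := h 0
  simpa [padHist] using this

lemma term_cons {μ : Belief Ω} {S : SeqP F μ} {ξ : Hist Ω} (h : TerminatesAfter S ξ) :
    TerminatesAfter S ((SPExp.triv (lastBelief μ ξ), lastBelief μ ξ) :: ξ) := by
  intro l
  have hlast : lastBelief μ ((SPExp.triv (lastBelief μ ξ), lastBelief μ ξ) :: ξ)
      = lastBelief μ ξ := rfl
  have hpad : padHist μ ((SPExp.triv (lastBelief μ ξ), lastBelief μ ξ) :: ξ) l
      = padHist μ ξ (l + 1) := by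
    simp [padHist, hlast, List.replicate_succ', List.append_assoc]
  rw [hpad, hlast]
  exact h (l + 1)

lemma histExp_tpay_mono {v : Belief Ω → ℝ} (hv : ∀ p, 0 ≤ v p) {μ : Belief Ω}
    (S : SeqP F μ) : ∀ (n : ℕ) (ξ : Hist Ω),
    histExp S (tpay v S) n ξ ≤ histExp S (tpay v S) (n + 1) ξ := by
  intro n
  induction n with
  | zero =>
    intro ξ
    show tpay v S ξ ≤ (S.next ξ).expect fun p => tpay v S ((S.next ξ, p) :: ξ)
    by_cases h : TerminatesAfter S ξ
    · rw [term_next h, aux_expect_triv]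
      have hterm := term_cons h
      simp only [tpay, if_pos h, if_pos hterm]
      exact le_of_eq rfl
    · rw [tpay, if_neg h]
      exact aux_expect_nonneg _ fun p => by
        unfold tpay; split
        · exact hv _
        · exact le_refl 0
  | succ n ih =>
    intro ξ
    exact aux_expect_mono _ fun p => ih _

section Combine

variable {q : Belief Ω} (e : SPExp Ω) (he : e ∈ F) (hσ : e.sigma = q)
  (Sp : ∀ p : Belief Ω, SeqP F p)

lemma aux_lastBelief_dropLast (q : Belief Ω) (ξ : Hist Ω) (h : ξ ≠ []) :
    lastBelief ((ξ.getLast h).2) ξ.dropLast = lastBelief q ξ := by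
  match ξ with
  | [x] => simp [lastBelief]
  | x :: y :: t => simp [lastBelief]

/-- The strategy that first plays e and then follows Sp p from posterior p. -/
def combine : SeqP F q where
  next ξ := if h : ξ = [] then e else (Sp (ξ.getLast h).2).next ξ.dropLast
  feasible ξ := by
    by_cases h : ξ = []
    · simpa [h] using he
    · simpa [h] using (Sp (ξ.getLast h).2).feasible ξ.dropLast
  bayes ξ := by
    by_cases h : ξ = []
    · subst h; simpa [lastBelief] using hσ
    · show (if h : ξ = [] then e else (Sp (ξ.getLast h).2).next ξ.dropLast).sigma
          = lastBelief q ξ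
      rw [dif_neg h, (Sp (ξ.getLast h).2).bayes, aux_lastBelief_dropLast q ξ h]

lemma aux_lastBelief_concat (q : Belief Ω) (ξ : Hist Ω) (x : SPExp Ω × Belief Ω) :
    lastBelief q (ξ ++ [x]) = lastBelief x.2 ξ := by
  cases ξ <;> simp [lastBelief]

lemma combine_next_nil : (combine e he hσ Sp).next [] = e := rfl

lemma combine_next_concat (ξ : Hist Ω) (x : SPExp Ω × Belief Ω) :
    (combine e he hσ Sp).next (ξ ++ [x]) = (Sp x.2).next ξ := by
  show (if h : ξ ++ [x] = [] then e
    else (Sp ((ξ ++ [x]).getLast h).2).next (ξ ++ [x]).dropLast) = _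
  rw [dif_neg (by simp)]
  rw [List.dropLast_concat]
  exact congrArg (fun y : SPExp Ω × Belief Ω => (Sp y.2).next ξ) List.getLast_concat

lemma combine_term_concat (ξ : Hist Ω) (x : SPExp Ω × Belief Ω) :
    TerminatesAfter (combine e he hσ Sp) (ξ ++ [x]) ↔ TerminatesAfter (Sp x.2) ξ := by
  have hlast : lastBelief q (ξ ++ [x]) = lastBelief x.2 ξ := aux_lastBelief_concat q ξ x
  have hpad : ∀ l, padHist q (ξ ++ [x]) l = padHist x.2 ξ l ++ [x] := by
    intro l
    simp [padHist, hlast, List.append_assoc]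
  constructor
  · intro h l
    have := h l
    rw [hpad, combine_next_concat, hlast] at this
    exact this
  · intro h l
    rw [hpad, combine_next_concat, hlast]
    exact h l

lemma histExp_combine_concat (g : Hist Ω → ℝ) (x : SPExp Ω × Belief Ω) :
    ∀ (n : ℕ) (ξ : Hist Ω),
    histExp (combine e he hσ Sp) g n (ξ ++ [x])
      = histExp (Sp x.2) (fun ζ => g (ζ ++ [x])) n ξ := by
  intro n
  induction n with
  | zero => intro ξ; rfl
  | succ n ih =>
    intro ξ
    show ((combine e he hσ Sp).next (ξ ++ [x])).expect
        (fun p => histExp (combine e he hσ Sp) g n (((combine e he hσ Sp).next (ξ ++ [x]), p) :: (ξ ++ [x]))) = _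
    rw [combine_next_concat]
    exact congrArg _ (funext fun p => ih (((Sp x.2).next ξ, p) :: ξ))

lemma histExp_combine_key (v : Belief Ω → ℝ) (n : ℕ) :
    histExp (combine e he hσ Sp) (tpay v (combine e he hσ Sp)) (n + 1) []
      = ∑ p ∈ e.w.support, e.w p * histExp (Sp p) (tpay v (Sp p)) n [] := by
  show ((combine e he hσ Sp).next []).expect
      (fun p => histExp (combine e he hσ Sp) (tpay v (combine e he hσ Sp)) n
        (((combine e he hσ Sp).next [], p) :: [])) = _
  rw [combine_next_nil e he hσ Sp]
  refine Finset.sum_congr rfl fun p _ => ?_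
  congr 1
  show histExp (combine e he hσ Sp) (tpay v (combine e he hσ Sp)) n [(e, p)]
      = histExp (Sp p) (tpay v (Sp p)) n []
  have h1 : ((e, p) :: ([] : Hist Ω)) = ([] : Hist Ω) ++ [(e, p)] := rfl
  rw [h1, histExp_combine_concat e he hσ Sp _ (e, p) n []]
  have h2 : (fun ζ => tpay v (combine e he hσ Sp) (ζ ++ [(e, p)])) = tpay v (Sp p) := by
    funext ζ
    show tpay v (combine e he hσ Sp) (ζ ++ [(e, p)]) = tpay v (Sp p) ζ
    unfold tpay
    rw [aux_lastBelief_concat q ζ (e, p)]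
    by_cases h : TerminatesAfter (Sp p) ζ
    · rw [if_pos h, if_pos ((combine_term_concat e he hσ Sp ζ (e, p)).mpr h)]
    · rw [if_neg h, if_neg (fun hc => h ((combine_term_concat e he hσ Sp ζ (e, p)).mp hc))]
  rw [h2]

end Combine

end AuxVInf

/-- v_∞ itself belongs to G: it dominates v and is "concave along" every feasible
experiment. -/
theorem vInf_mem_G {Ω : Type*} [Fintype Ω] [Nonempty Ω]
    (F : Set (SPExp Ω)) (hTF : Trivials Ω ⊆ F)
    (v : Belief Ω → ℝ) (Vlo Vhi : ℝ) (hVlo : 0 < Vlo) (hVV : Vlo ≤ Vhi)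
    (hvlo : ∀ p, Vlo ≤ v p) (hvhi : ∀ p, v p ≤ Vhi)
    (husc : UpperSemicontinuous v) :
    (∀ p : Belief Ω, v p ≤ vInf F v p) ∧
    ∀ e ∈ F, SPExp.expect e (vInf F v) ≤ vInf F v (SPExp.sigma e) := by
  haveI hne : ∀ p : Belief Ω, Nonempty (SeqP F p) := fun p => ⟨trivSP hTF p⟩
  have hv0 : ∀ p, 0 ≤ v p := fun p => hVlo.le.trans (hvlo p)
  have htpbd : ∀ (μ : Belief Ω) (S : SeqP F μ) (ξ : Hist Ω), tpay v S ξ ≤ Vhi := by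
    intro μ S ξ
    unfold tpay; split
    · exact hvhi _
    · exact (hVlo.trans_le hVV).le
  have hInfBd : ∀ (μ : Belief Ω) (S : SeqP F μ), infUtility v S ≤ Vhi := by
    intro μ S
    rw [infUtility_eq]
    exact ciSup_le fun n => aux_histExp_le S (htpbd μ S) n []
  have hBddN : ∀ (μ : Belief Ω) (S : SeqP F μ),
      BddAbove (Set.range fun n : ℕ => histExp S (tpay v S) n []) := by
    intro μ S
    exact ⟨Vhi, by rintro x ⟨n, rfl⟩; exact aux_histExp_le S (htpbd μ S) n []⟩
  have hBdd : ∀ p : Belief Ω, BddAbove (Set.range fun S : SeqP F p => infUtility v S) := by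
    intro p
    exact ⟨Vhi, by rintro x ⟨S, rfl⟩; exact hInfBd p S⟩
  constructor
  · intro p
    have h0 : histExp (trivSP hTF p) (tpay v (trivSP hTF p)) 0 [] = v p := by
      show tpay v (trivSP hTF p) [] = v p
      unfold tpay
      rw [if_pos (trivSP_term hTF p [])]
      rfl
    have h1 : v p ≤ infUtility v (trivSP hTF p) := by
      rw [infUtility_eq, ← h0]
      exact le_ciSup (hBddN p (trivSP hTF p)) 0
    exact h1.trans (le_ciSup (hBdd p) (trivSP hTF p))
  · intro e he
    refine le_of_forall_pos_le_add ?_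
    intro ε hε
    have hε2 : 0 < ε / 2 := by linarith
    -- choose near-optimal strategies
    have hchoose : ∀ p : Belief Ω, ∃ S : SeqP F p, vInf F v p - ε / 2 < infUtility v S := by
      intro p
      have : vInf F v p - ε / 2 < vInf F v p := by linarith
      exact exists_lt_of_lt_ciSup this
    choose Sp hSp using hchoose
    set Sc := combine e he rfl Sp with hSc
    -- choose near-optimal horizons
    have hchoose2 : ∀ p : Belief Ω, ∃ n : ℕ,
        infUtility v (Sp p) - ε / 2 < histExp (Sp p) (tpay v (Sp p)) n [] := by
      intro p
      have : infUtility v (Sp p) - ε / 2 < infUtility v (Sp p) := by linarith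
      rw [infUtility_eq] at this
      exact exists_lt_of_lt_ciSup this
    choose np hnp using hchoose2
    set N := e.w.support.sup np with hN
    have hmono : ∀ p : Belief Ω, Monotone fun n => histExp (Sp p) (tpay v (Sp p)) n [] :=
      fun p => monotone_nat_of_le_succ fun n => histExp_tpay_mono hv0 (Sp p) n []
    have hstep : ∀ p ∈ e.w.support,
        vInf F v p - ε < histExp (Sp p) (tpay v (Sp p)) N [] := by
      intro p hp
      have h1 := hSp p
      have h2 := hnp p
      have h3 : histExp (Sp p) (tpay v (Sp p)) (np p) []
          ≤ histExp (Sp p) (tpay v (Sp p)) N [] :=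
        hmono p (Finset.le_sup hp)
      linarith
    have hkey : histExp Sc (tpay v Sc) (N + 1) []
        = ∑ p ∈ e.w.support, e.w p * histExp (Sp p) (tpay v (Sp p)) N [] :=
      histExp_combine_key e he rfl Sp v N
    have hsum : SPExp.expect e (vInf F v) - ε
        ≤ ∑ p ∈ e.w.support, e.w p * histExp (Sp p) (tpay v (Sp p)) N [] := by
      have : SPExp.expect e (vInf F v) - ε
          = ∑ p ∈ e.w.support, e.w p * (vInf F v p - ε) := by
        rw [SPExp.expect]
        have : ∑ p ∈ e.w.support, e.w p * (vInf F v p - ε)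
            = ∑ p ∈ e.w.support, e.w p * vInf F v p - (∑ p ∈ e.w.support, e.w p) * ε := by
          rw [Finset.sum_mul, ← Finset.sum_sub_distrib]
          exact Finset.sum_congr rfl fun p _ => by ring
        rw [this, e.sum_one, one_mul]
      rw [this]
      exact Finset.sum_le_sum fun p hp =>
        mul_le_mul_of_nonneg_left (hstep p hp).le (e.nonneg p)
    have hup : histExp Sc (tpay v Sc) (N + 1) [] ≤ infUtility v Sc := by
      rw [infUtility_eq]
      exact le_ciSup (hBddN _ Sc) (N + 1)
    have hfin : infUtility v Sc ≤ vInf F v (SPExp.sigma e) :=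
      le_ciSup (hBdd (SPExp.sigma e)) Sc
    linarith [hsum, hkey ▸ hup, hfin]
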